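/- arXiv:2510.15698 — 3 statements merged into one kernel-verified Lean document; each statement's English description precedes it below -/
import Mathlib

section
/- Let T be a well-nested b-balanced rooted tree. Then there is exactly one bijection φ from the set of indices of reflect layers to the set of indices of split layers satisfying: φ(1) = i_max (the index of the last layer), i < φ(i) for all reflect-layer indices i, and for all reflect-layer indices i, j with i < j < φ(i) one has φ(j) < φ(i). -/
/-- The layer structure of a well-nested b-balanced rooted tree, abstracted to
the indices of its layers: layers are indexed 1,…,imax, `R` is the set of
indices of reflect layers and `S := {1,…,imax} \ R` the set of indices of
split layers.  `GoodBij R S imax φ` says φ is a bijection from reflect-layer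
indices to split-layer indices with φ(1) = imax, i < φ(i) for each reflect
index i, and φ(j) < φ(i) whenever i < j < φ(i) for reflect indices i, j. -/
def GoodBij (R S : Finset ℕ) (imax : ℕ) (φ : ℕ → ℕ) : Prop :=
  Set.BijOn φ ↑R ↑S ∧ φ 1 = imax ∧ (∀ i ∈ R, i < φ i) ∧
    ∀ i ∈ R, ∀ j ∈ R, i < j → j < φ i → φ j < φ i

/-- Well-nestedness of the layer structure: equally many reflect and split
layers, layer 1 is a reflect layer, layer imax is a split layer, and a
bijection as in `GoodBij` exists. -/
def WellNestedLayers (R S : Finset ℕ) (imax : ℕ) : Prop :=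
  1 ≤ imax ∧ R ⊆ Finset.Icc 1 imax ∧ S = Finset.Icc 1 imax \ R ∧
    R.card = S.card ∧ 1 ∈ R ∧ imax ∈ S ∧ ∃ φ : ℕ → ℕ, GoodBij R S imax φ

lemma goodbij_balance (R S : Finset ℕ) (imax : ℕ)
    (hRS : ∀ x ∈ R, x ∉ S) (hSR : ∀ x ∈ S, x ∉ R)
    (φ : ℕ → ℕ) (hφ : GoodBij R S imax φ) (i : ℕ) (hi : i ∈ R) :
    (R ∩ Finset.Icc i (φ i)).card = (S ∩ Finset.Icc i (φ i)).card := by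
  obtain ⟨hbij, -, hlt, hnest⟩ := hφ
  have hiφ : i < φ i := hlt i hi
  apply Finset.card_bij (fun j _ => φ j)
  · rintro j hj
    simp only [Finset.mem_inter, Finset.mem_Icc] at hj ⊢
    obtain ⟨hjR, hij, hjφ⟩ := hj
    have hφjS : φ j ∈ S := hbij.mapsTo hjR
    rcases eq_or_lt_of_le hij with rfl | hij'
    · exact ⟨hφjS, le_of_lt hiφ, le_refl _⟩
    · have hjφ' : j < φ i := lt_of_le_of_ne hjφ (by
        intro h; exact hSR (φ i) (hbij.mapsTo hi) (h ▸ hjR))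
      have := hnest i hi j hjR hij' hjφ'
      exact ⟨hφjS, le_of_lt (lt_trans hij' (hlt j hjR)), le_of_lt this⟩
  · rintro a ha b hb hab
    simp only [Finset.mem_inter] at ha hb
    exact hbij.injOn ha.1 hb.1 hab
  · rintro t ht
    simp only [Finset.mem_inter, Finset.mem_Icc] at ht
    obtain ⟨htS, hit, htφ⟩ := ht
    obtain ⟨j, hjR, hjt⟩ := hbij.surjOn htS
    refine ⟨j, ?_, hjt⟩
    simp only [Finset.mem_inter, Finset.mem_Icc]
    have hjlt : j < φ j := hlt j hjR
    have hit' : i < t := lt_of_le_of_ne hit (by rintro rfl; exact hRS i hi htS)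
    constructor
    · exact hjR
    constructor
    · -- i ≤ j
      by_contra hc
      push_neg at hc
      have hji : j < i := hc
      have hiφj : i < φ j := by rw [hjt]; exact hit'
      have := hnest j hjR i hi hji hiφj
      rw [hjt] at this
      omega
    · -- j ≤ φ i
      rcases le_or_gt t (φ i) with h | h
      · have : j < φ i := by
          calc j < φ j := hjlt
            _ = t := hjt
            _ ≤ φ i := htφ
        omega
      · omega

lemma goodbij_strict (R S : Finset ℕ) (imax : ℕ)
    (hRS : ∀ x ∈ R, x ∉ S)
    (φ : ℕ → ℕ) (hφ : GoodBij R S imax φ) (i : ℕ) (hi : i ∈ R)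
    (s : ℕ) (hs : s ∈ S) (his : i < s) (hsφ : s < φ i) :
    (S ∩ Finset.Icc i s).card < (R ∩ Finset.Icc i s).card := by
  obtain ⟨hbij, -, hlt, hnest⟩ := hφ
  set g := Function.invFunOn φ ↑R with hg
  have hiin : i ∈ (R ∩ Finset.Icc i s).erase i → False := fun h =>
    (Finset.ne_of_mem_erase h) rfl
  have hcard : (S ∩ Finset.Icc i s).card ≤ ((R ∩ Finset.Icc i s).erase i).card := by
    apply Finset.card_le_card_of_injOn g
    · rintro t ht
      simp only [Finset.mem_coe, Finset.mem_inter, Finset.mem_Icc] at ht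
      obtain ⟨htS, hit, hts⟩ := ht
      have hex : ∃ a ∈ (↑R : Set ℕ), φ a = t := hbij.surjOn htS
      have hgR : g t ∈ (↑R : Set ℕ) := Function.invFunOn_mem hex
      have hgeq : φ (g t) = t := Function.invFunOn_eq hex
      have hgR' : g t ∈ R := hgR
      have hglt : g t < t := by
        have h' := hlt (g t) hgR'
        rwa [hgeq] at h'
      have hit' : i < t := lt_of_le_of_ne hit (by rintro rfl; exact hRS i hi htS)
      -- i < g t
      have higt : i < g t := by
        by_contra hc
        push_neg at hc
        rcases eq_or_lt_of_le hc with h | h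
        · -- g t = i, then φ i = t ≤ s < φ i
          have : φ i = t := by rw [← h]; exact hgeq
          omega
        · have hiφg : i < φ (g t) := by rw [hgeq]; exact hit'
          have := hnest (g t) hgR' i hi h hiφg
          rw [hgeq] at this
          omega
      show g t ∈ (R ∩ Finset.Icc i s).erase i
      apply Finset.mem_erase_of_ne_of_mem (Nat.ne_of_gt higt)
      simp only [Finset.mem_inter, Finset.mem_Icc]
      exact ⟨hgR', le_of_lt higt, by omega⟩
    · rintro a ha b hb hab
      simp only [Finset.coe_inter, Set.mem_inter_iff, Finset.mem_coe] at ha hb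
      have hexa : ∃ x ∈ (↑R : Set ℕ), φ x = a := hbij.surjOn ha.1
      have hexb : ∃ x ∈ (↑R : Set ℕ), φ x = b := hbij.surjOn hb.1
      calc a = φ (g a) := (Function.invFunOn_eq hexa).symm
        _ = φ (g b) := by rw [hab]
        _ = b := Function.invFunOn_eq hexb
  have hmem : i ∈ R ∩ Finset.Icc i s := by
    simp only [Finset.mem_inter, Finset.mem_Icc]
    exact ⟨hi, le_refl _, le_of_lt his⟩
  have := Finset.card_erase_lt_of_mem hmem
  omega

/-- for a well-nested b-balanced rooted tree there is exactly one
bijection φ between reflect-layer indices and split-layer indices with the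
properties of Definition "well-nested": any two such bijections agree on the
set of reflect-layer indices. -/
theorem stmt0 (R S : Finset ℕ) (imax : ℕ)
    (hwn : WellNestedLayers R S imax) :
    ∃ φ : ℕ → ℕ, GoodBij R S imax φ ∧
      ∀ ψ : ℕ → ℕ, GoodBij R S imax ψ → ∀ i ∈ R, φ i = ψ i := by
  obtain ⟨-, -, hSdef, -, -, -, φ, hφ⟩ := hwn
  have hRS : ∀ x ∈ R, x ∉ S := by
    intro x hx hxS
    rw [hSdef] at hxS
    exact (Finset.mem_sdiff.mp hxS).2 hx
  have hSR : ∀ x ∈ S, x ∉ R := by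
    intro x hx
    rw [hSdef] at hx
    exact (Finset.mem_sdiff.mp hx).2
  refine ⟨φ, hφ, fun ψ hψ i hi => ?_⟩
  by_contra hne
  rcases lt_or_gt_of_ne hne with h | h
  · -- φ i < ψ i
    have h1 := goodbij_balance R S imax hRS hSR φ hφ i hi
    have h2 := goodbij_strict R S imax hRS ψ hψ i hi (φ i)
      (hφ.1.mapsTo hi) (hφ.2.2.1 i hi) h
    omega
  · have h1 := goodbij_balance R S imax hRS hSR ψ hψ i hi
    have h2 := goodbij_strict R S imax hRS φ hφ i hi (ψ i)
      (hψ.1.mapsTo hi) (hψ.2.2.1 i hi) h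
    omega
end

section
/- Define the power tower P_Δ(j, k) for positive integers j, k, Δ ≥ 3 by P_Δ(1, k) = k and P_Δ(j+1, k) = Δ^{P_Δ(j, k)}. Define a sequence a_2 = Δ^3 + 2Δ^2 + 2Δ + 3 and, assuming a_i ≥ 4 for all i, a_{i+1} ≤ 4·Δ^{a_i / 2} (with real exponent a_i/2). Then for every integer i ≥ 2, a_i ≤ P_Δ(i, Δ+1). -/
/-- `ptower Δ j k` is the power tower of height j with top exponent k and all
other entries Δ:  P_Δ(1,k) = k and P_Δ(j+1,k) = Δ^{P_Δ(j,k)}. -/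
def ptower (Δ j k : ℕ) : ℕ := Nat.rec k (fun _ ih => Δ ^ ih) (j - 1)

lemma ptower_one (Δ k : ℕ) : ptower Δ 1 k = k := rfl

lemma ptower_succ (Δ j k : ℕ) (hj : 1 ≤ j) :
    ptower Δ (j + 1) k = Δ ^ ptower Δ j k := by
  obtain ⟨m, rfl⟩ := Nat.exists_eq_add_of_le' hj
  rfl

lemma four_le_ptower (Δ : ℕ) (hΔ : 3 ≤ Δ) :
    ∀ i, 1 ≤ i → 4 ≤ ptower Δ i (Δ + 1) := by
  intro i hi
  induction i, hi using Nat.le_induction with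
  | base => simpa [ptower_one] using hΔ
  | succ n hn ih =>
    rw [ptower_succ _ _ _ hn]
    calc (4 : ℕ) ≤ 3 ^ 4 := by norm_num
    _ ≤ Δ ^ ptower Δ n (Δ + 1) :=
      Nat.pow_le_pow_left hΔ 4 |>.trans (Nat.pow_le_pow_right (by omega) ih)

/-- if a₂ = Δ³ + 2Δ² + 2Δ + 3, aᵢ ≥ 4 for all i ≥ 2, and
a_{i+1} ≤ 4·Δ^{aᵢ/2} (real exponent), then aᵢ ≤ P_Δ(i, Δ+1) for all i ≥ 2. -/
theorem stmt7 (Δ : ℕ) (hΔ : 3 ≤ Δ) (a : ℕ → ℝ)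
    (ha2 : a 2 = (Δ : ℝ) ^ 3 + 2 * (Δ : ℝ) ^ 2 + 2 * (Δ : ℝ) + 3)
    (ha4 : ∀ i, 2 ≤ i → 4 ≤ a i)
    (hrec : ∀ i, 2 ≤ i → a (i + 1) ≤ 4 * (Δ : ℝ) ^ (a i / 2)) :
    ∀ i, 2 ≤ i → a i ≤ (ptower Δ i (Δ + 1) : ℝ) := by
  have hD1 : (1 : ℝ) ≤ (Δ : ℝ) := by exact_mod_cast by omega
  have hD0 : (0 : ℝ) < (Δ : ℝ) := by linarith
  intro i hi
  induction i, hi using Nat.le_induction with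
  | base =>
    rw [ha2, show ptower Δ 2 (Δ + 1) = ptower Δ (1 + 1) (Δ + 1) from rfl, ptower_succ _ _ _ le_rfl, ptower_one]
    have hnat : Δ ^ 3 + 2 * Δ ^ 2 + 2 * Δ + 3 ≤ Δ ^ (Δ + 1) := by
      calc Δ ^ 3 + 2 * Δ ^ 2 + 2 * Δ + 3 ≤ 2 * Δ ^ 3 := by nlinarith
      _ ≤ Δ ^ 4 := by nlinarith [pow_pos (show 0 < Δ by omega) 3]
      _ ≤ Δ ^ (Δ + 1) := Nat.pow_le_pow_right (by omega) (by omega)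
    exact_mod_cast hnat
  | succ n hn ih =>
    set T : ℕ := ptower Δ n (Δ + 1) with hT
    have hT4 : (4 : ℝ) ≤ (T : ℝ) := by
      exact_mod_cast four_le_ptower Δ hΔ n (by omega)
    have h1 : a (n + 1) ≤ 4 * (Δ : ℝ) ^ (a n / 2) := hrec n hn
    have h2 : (Δ : ℝ) ^ (a n / 2) ≤ (Δ : ℝ) ^ ((T : ℝ) / 2) :=
      Real.rpow_le_rpow_of_exponent_le hD1 (by linarith)
    have h4le : (4 : ℝ) ≤ (Δ : ℝ) ^ ((T : ℝ) / 2) := by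
      have : (Δ : ℝ) ^ (2 : ℝ) ≤ (Δ : ℝ) ^ ((T : ℝ) / 2) :=
        Real.rpow_le_rpow_of_exponent_le hD1 (by linarith)
      have h2' : (Δ : ℝ) ^ (2 : ℝ) = (Δ : ℝ) * (Δ : ℝ) := by
        rw [show (2 : ℝ) = ((2 : ℕ) : ℝ) by norm_num, Real.rpow_natCast]; ring
      have hD3 : (3 : ℝ) ≤ (Δ : ℝ) := by exact_mod_cast hΔ
      rw [h2'] at this
      nlinarith
    have hpos : (0 : ℝ) < (Δ : ℝ) ^ ((T : ℝ) / 2) := Real.rpow_pos_of_pos hD0 _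
    have h3 : (4 : ℝ) * (Δ : ℝ) ^ ((T : ℝ) / 2) ≤
        (Δ : ℝ) ^ ((T : ℝ) / 2) * (Δ : ℝ) ^ ((T : ℝ) / 2) := by
      nlinarith
    have h5 : (Δ : ℝ) ^ ((T : ℝ) / 2) * (Δ : ℝ) ^ ((T : ℝ) / 2) = (Δ : ℝ) ^ (T : ℝ) := by
      rw [← Real.rpow_add hD0]; ring_nf
    have h6 : ((ptower Δ (n + 1) (Δ + 1) : ℕ) : ℝ) = (Δ : ℝ) ^ (T : ℝ) := by
      rw [ptower_succ _ _ _ (by omega : 1 ≤ n), ← hT]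
      push_cast
      rw [Real.rpow_natCast]
    rw [h6]
    calc a (n + 1) ≤ 4 * (Δ : ℝ) ^ (a n / 2) := h1
    _ ≤ 4 * (Δ : ℝ) ^ ((T : ℝ) / 2) := by nlinarith
    _ ≤ (Δ : ℝ) ^ ((T : ℝ) / 2) * (Δ : ℝ) ^ ((T : ℝ) / 2) := h3
    _ = (Δ : ℝ) ^ (T : ℝ) := h5
end

section
/- Let T be a well-nested b-balanced rooted tree equipped with its unique matching bijection φ between reflect-layer indices and split-layer indices. Then for every reflect-layer index i, φ(i) equals the minimal index j > i such that the layers L_i, L_{i+1}, …, L_j contain equally many reflect layers and split layers. -/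
/-- for every matching bijection φ (which is unique) of a
well-nested b-balanced rooted tree and every reflect-layer index i, φ(i) is
the least index j > i such that the layers Lᵢ,…,Lⱼ contain equally many
reflect layers and split layers. -/
theorem stmt14 (R S : Finset ℕ) (imax : ℕ)
    (hwn : WellNestedLayers R S imax)
    (φ : ℕ → ℕ) (hφ : GoodBij R S imax φ) :
    ∀ i ∈ R, IsLeast {j : ℕ | i < j ∧
      (R ∩ Finset.Icc i j).card = (S ∩ Finset.Icc i j).card} (φ i) := by
  obtain ⟨hφbij, hφ1, hφlt, hnest⟩ := hφ
  obtain ⟨h1max, hRsub, hS, hcardRS, h1R, hmaxS, -⟩ := hwn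
  have hdisj : ∀ x, x ∈ R → x ∉ S := by
    intro x hx hxS
    rw [hS, Finset.mem_sdiff] at hxS
    exact hxS.2 hx
  intro i hiR
  -- key: any k ∈ R with φ k ∈ [i, bound ≤ φ i] satisfies i ≤ k
  have hkey : ∀ k ∈ R, i ≤ φ k → φ k ≤ φ i → i ≤ k := by
    intro k hkR h1 h2
    by_contra h
    push_neg at h
    have hik : φ k ≠ i := by
      intro heq
      exact hdisj i hiR (heq ▸ hφbij.mapsTo hkR)
    have : i < φ k := lt_of_le_of_ne h1 (Ne.symm hik)
    have := hnest k hkR i hiR h this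
    omega
  constructor
  · refine ⟨hφlt i hiR, ?_⟩
    apply Finset.card_bij (fun a _ => φ a)
    · intro a ha
      rw [Finset.mem_inter, Finset.mem_Icc] at ha ⊢
      have haR := ha.1
      have hai := ha.2.1
      have haφ := ha.2.2
      have hφa : φ a ∈ S := hφbij.mapsTo haR
      refine ⟨hφa, le_of_lt (lt_of_le_of_lt hai (hφlt a haR)), ?_⟩
      rcases eq_or_lt_of_le hai with h | h
      · rw [← h]
      · have haφi : a ≠ φ i := by
          intro heq
          exact hdisj a haR (heq ▸ hφbij.mapsTo hiR)
        exact le_of_lt (hnest i hiR a haR h (lt_of_le_of_ne haφ haφi))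
    · intro a ha b hb hab
      rw [Finset.mem_inter] at ha hb
      exact hφbij.injOn (by exact_mod_cast ha.1) (by exact_mod_cast hb.1) hab
    · intro s hs
      rw [Finset.mem_inter, Finset.mem_Icc] at hs
      obtain ⟨k, hkR, hks⟩ := hφbij.surjOn (by exact_mod_cast hs.1 : (s:ℕ) ∈ (S:Set ℕ))
      have hkR : k ∈ R := by exact_mod_cast hkR
      have hik : i ≤ k := hkey k hkR (hks ▸ hs.2.1) (hks ▸ hs.2.2)
      refine ⟨k, ?_, hks⟩
      rw [Finset.mem_inter, Finset.mem_Icc]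
      exact ⟨hkR, hik, le_of_lt (lt_of_lt_of_le (hφlt k hkR) (hks ▸ hs.2.2))⟩
  · intro j hj
    obtain ⟨hij, hcards⟩ := hj
    by_contra hcon
    push_neg at hcon
    -- j < φ i; derive contradiction
    set f := Function.invFunOn φ ↑R with hf
    have hmaps : ∀ s ∈ S ∩ Finset.Icc i j, f s ∈ (R ∩ Finset.Icc i j).erase i := by
      intro s hs
      rw [Finset.mem_inter, Finset.mem_Icc] at hs
      have hsim : (s:ℕ) ∈ φ '' ↑R := hφbij.surjOn (by exact_mod_cast hs.1)
      have hfsR : f s ∈ (R : Set ℕ) := Function.invFunOn_mem hsim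
      have hfseq : φ (f s) = s := Function.invFunOn_eq hsim
      have hfsR' : f s ∈ R := by exact_mod_cast hfsR
      have hlow : i ≤ f s := hkey (f s) hfsR' (by rw [hfseq]; exact hs.2.1)
        (by rw [hfseq]; omega)
      have hhigh : f s ≤ j :=
        le_of_lt (lt_of_lt_of_le (hφlt _ hfsR') (by rw [hfseq]; exact hs.2.2))
      have hne : f s ≠ i := by
        intro heq
        have : φ i = s := heq ▸ hfseq
        omega
      rw [Finset.mem_erase, Finset.mem_inter, Finset.mem_Icc]
      exact ⟨hne, hfsR', hlow, hhigh⟩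
    have hinj : Set.InjOn f ↑(S ∩ Finset.Icc i j) := by
      intro a ha b hb hab
      rw [Finset.coe_inter, Set.mem_inter_iff] at ha hb
      have ha' : (a:ℕ) ∈ φ '' ↑R := hφbij.surjOn ha.1
      have hb' : (b:ℕ) ∈ φ '' ↑R := hφbij.surjOn hb.1
      calc a = φ (f a) := (Function.invFunOn_eq ha').symm
        _ = φ (f b) := by rw [hab]
        _ = b := Function.invFunOn_eq hb'
    have hle := Finset.card_le_card_of_injOn f hmaps hinj
    have hiIn : i ∈ R ∩ Finset.Icc i j := by
      rw [Finset.mem_inter, Finset.mem_Icc]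
      exact ⟨hiR, le_refl i, le_of_lt hij⟩
    rw [Finset.card_erase_of_mem hiIn] at hle
    have hpos : 0 < (R ∩ Finset.Icc i j).card := Finset.card_pos.mpr ⟨i, hiIn⟩
    omega
end
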